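/- Let (λ_j) be a good sequence (strictly increasing, λ_0 = 0, λ_j ≥ 1 for j ≥ 1, λ_j → ∞, sup_j(λ_{j+1}-λ_j) = ℓ < ∞) and φ(u) = Σ_{j=2}^{j_u - 1} (λ_j - λ_{j-1})/λ_{j-1}. Then for every ε > 0 there exists U such that for all u ≥ U, φ(u) ≤ (1+ε)(log u - log λ_1). -/
import Mathlib


open Finset Filter

lemma aux_term10 (ε ℓ a b : ℝ) (hε : 0 < ε) (hb1 : 1 ≤ b) (hb : 2 * ℓ / ε ≤ b)
    (hab : b < a) (hgap : a - b ≤ ℓ) :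
    (a - b) / b ≤ (1 + ε / 2) * (Real.log a - Real.log b) := by
  have hb0 : (0:ℝ) < b := lt_of_lt_of_le one_pos hb1
  have ha0 : (0:ℝ) < a := hb0.trans hab
  have hl : ℓ ≤ ε / 2 * b := by
    rw [div_le_iff₀ hε] at hb; linarith
  have key1 : (a - b) / a ≤ Real.log a - Real.log b := by
    have h := Real.log_le_sub_one_of_pos (show (0:ℝ) < b / a from div_pos hb0 ha0)
    rw [Real.log_div hb0.ne' ha0.ne'] at h
    have h2 : (a - b) / a = 1 - b / a := by field_simp
    linarith
  have h3 : (a - b) / b ≤ (1 + ε / 2) * ((a - b) / a) := by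
    rw [show (1 + ε / 2) * ((a - b) / a) = ((1 + ε / 2) * (a - b)) / a from
      (mul_div_assoc _ _ _).symm, div_le_div_iff₀ hb0 ha0]
    nlinarith [sub_pos.mpr hab]
  have h4 : (1 + ε / 2) * ((a - b) / a) ≤ (1 + ε / 2) * (Real.log a - Real.log b) :=
    mul_le_mul_of_nonneg_left key1 (by linarith)
  linarith

theorem stmt10 (lam : ℕ → ℝ) (hmono : StrictMono lam) (h0 : lam 0 = 0)
    (h1 : ∀ j, 1 ≤ j → 1 ≤ lam j) (htop : Tendsto lam atTop atTop)
    (ℓ : ℝ) (hgap : ∀ j, lam (j + 1) - lam j ≤ ℓ)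
    (ju : ℝ → ℕ) (hju : ∀ u : ℝ, 1 ≤ u → 1 ≤ ju u ∧ lam (ju u - 1) ≤ u ∧ u < lam (ju u))
    (φ : ℝ → ℝ)
    (hφ : ∀ u, φ u = ∑ j ∈ Icc 2 (ju u - 1), (lam j - lam (j - 1)) / lam (j - 1)) :
    ∀ ε > (0 : ℝ), ∃ U : ℝ, ∀ u, U ≤ u →
      φ u ≤ (1 + ε) * (Real.log u - Real.log (lam 1)) := by
  intro ε hε
  obtain ⟨N, hN⟩ := (htop.eventually_ge_atTop (max 1 (2 * ℓ / ε))).exists_forall_of_atTop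
  set J : ℕ := N + 2 with hJ
  have hJ1 : max 1 (2 * ℓ / ε) ≤ lam (J - 1) := hN (J - 1) (by omega)
  set C : ℝ := ∑ j ∈ Icc 2 (J - 1), (lam j - lam (j - 1)) / lam (j - 1) with hC
  have key : ∀ m, J - 1 ≤ m →
      ∑ j ∈ Icc 2 m, (lam j - lam (j - 1)) / lam (j - 1)
        ≤ C + (1 + ε / 2) * (Real.log (lam m) - Real.log (lam (J - 1))) := by
    intro m hm
    induction m, hm using Nat.le_induction with
    | base => simp [hC]
    | succ m hm ih =>
      rw [Finset.sum_Icc_succ_top (by omega : 2 ≤ m + 1)]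
      have hterm : (lam (m + 1) - lam (m + 1 - 1)) / lam (m + 1 - 1)
          ≤ (1 + ε / 2) * (Real.log (lam (m + 1)) - Real.log (lam m)) := by
        have hmm : lam (J - 1) ≤ lam m := hmono.monotone hm
        simp only [Nat.add_sub_cancel]
        exact aux_term10 ε ℓ (lam (m + 1)) (lam m) hε
          (le_trans (le_trans (le_max_left _ _) hJ1) hmm)
          (le_trans (le_trans (le_max_right _ _) hJ1) hmm)
          (hmono (Nat.lt_succ_self m)) (hgap m)
      linarith
  refine ⟨max (max 1 (lam J)) (Real.exp ((C + (1 + ε) * Real.log (lam 1)) * (2 / ε))), ?_⟩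
  intro u hu
  have hu1 : (1:ℝ) ≤ u := le_trans (le_trans (le_max_left _ _) (le_max_left _ _)) hu
  obtain ⟨hju1, hjule, hjult⟩ := hju u hu1
  have huJ : lam J ≤ u := le_trans (le_trans (le_max_right _ _) (le_max_left _ _)) hu
  have hJlt : J < ju u := by
    have := lt_of_le_of_lt huJ hjult
    exact hmono.lt_iff_lt.mp this
  have hJle : J ≤ ju u - 1 := by omega
  have hmain := key (ju u - 1) (by omega)
  rw [hφ]
  have hpos : (0:ℝ) < lam (ju u - 1) :=
    lt_of_lt_of_le one_pos (h1 _ (by omega))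
  have hlogu : Real.log (lam (ju u - 1)) ≤ Real.log u :=
    Real.log_le_log hpos hjule
  have hlogJ : (0:ℝ) ≤ Real.log (lam (J - 1)) :=
    Real.log_nonneg (le_trans (le_max_left _ _) hJ1)
  have hexp : Real.exp ((C + (1 + ε) * Real.log (lam 1)) * (2 / ε)) ≤ u :=
    le_trans (le_max_right _ _) hu
  have hlogU : (C + (1 + ε) * Real.log (lam 1)) * (2 / ε) ≤ Real.log u := by
    have := Real.log_le_log (Real.exp_pos _) hexp
    rwa [Real.log_exp] at this
  have h5 : (C + (1 + ε) * Real.log (lam 1)) * (2 / ε) * (ε / 2) ≤ Real.log u * (ε / 2) :=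
    mul_le_mul_of_nonneg_right hlogU (by positivity)
  have h6 : (C + (1 + ε) * Real.log (lam 1)) * (2 / ε) * (ε / 2)
      = C + (1 + ε) * Real.log (lam 1) := by
    field_simp
  have h7 : (0:ℝ) ≤ (1 + ε / 2) * Real.log (lam (J - 1)) :=
    mul_nonneg (by linarith) hlogJ
  nlinarith [hmain, hlogu, hε.le]
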